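/- Let ⋔ : E ⥤ B be a state-parameter fibration with functors q and p. For morphisms π_X : X ⟶ Y and π_Z : Z ⟶ Y in B, the fibered product q(Z) ×_{qY} p(X) (a pullback in E of q(π_Z) and the composite p(X) ⟶ q(X) ⟶ q(Y)) satisfies q(Z) ×_{qY} p(X) ≅ p(Z) ⊗_{qY} p(X) ≅ p(⋔(q(Z) ×_{qY} p(X))). -/

import Mathlib

open CategoryTheory Limits MonoidalCategory MonoidalClosed

universe v₁ v₂ u₁ u₂

variable {E : Type u₁} {B : Type u₂} [Category.{v₁} E] [Category.{v₂} B]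

/-- A morphism `f : X ⟶ Y` of `E` is *cartesian* with respect to a functor `F : E ⥤ B`. -/
def IsCart (F : E ⥤ B) {X Y : E} (f : X ⟶ Y) : Prop :=
  ∀ ⦃Z : E⦄ (g : Z ⟶ Y) (b : F.obj Z ⟶ F.obj X),
    F.map g = b ≫ F.map f → ∃! u : Z ⟶ X, F.map u = b ∧ u ≫ f = g

/-- A *state-parameter fibration* (Definition 2.10): a pullback fibration `⋔ = sharp` from a
symmetric monoidal closed category `E` of states to a locally cartesian closed category `B`
of parameters, such that `⋔` preserves the monoidal closed structure, the tensor product of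
cartesian arrows is cartesian, each slice `E/qX` is monoidal closed via the fibered tensor
`⊗_{qX}` and fibered hom `⊸_{qX}` (given by cartesian liftings), together with the
parameterized-terminal functor `q` (full and faithful right adjoint of `⋔` with identity
counit), the parameterized-unit functor `p` (cartesian liftings of the unique maps to the
terminal object, with `p 1 = I`), and a right adjoint `♭` of `p`. -/
structure StateParamFib (E : Type u₁) (B : Type u₂) [Category.{v₁} E] [Category.{v₂} B]
    [MonoidalCategory E] [SymmetricCategory E] [MonoidalClosed E] [HasTerminal E]
    [CartesianMonoidalCategory B] [MonoidalClosed B] [HasPullbacks B] where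
  /-- the fibration `⋔ : E ⥤ B` -/
  sharp : E ⥤ B
  /-- `⋔` is a Grothendieck fibration -/
  isFib : ∀ ⦃A : E⦄ ⦃X : B⦄ (a : X ⟶ sharp.obj A),
    ∃ (L : E) (f : L ⟶ A) (hL : sharp.obj L = X),
      sharp.map f = eqToHom hL ≫ a ∧ IsCart sharp f
  /-- `⋔` preserves the terminal object -/
  presTerminal : IsTerminal (sharp.obj (⊤_ E))
  /-- `B` is locally cartesian closed -/
  overCFP : ∀ X : B, CartesianMonoidalCategory (Over X)
  overCC : ∀ X : B, @MonoidalClosed (Over X) _ (overCFP X).toMonoidalCategory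
  /-- `⋔` is a monoidal closed functor -/
  sharpUnitIso : sharp.obj (𝟙_ E) ≅ 𝟙_ B
  sharpTensorIso : ∀ A C : E, sharp.obj (A ⊗ C) ≅ sharp.obj A ⊗ sharp.obj C
  sharpHomIso : ∀ A C : E,
    sharp.obj ((ihom A).obj C) ≅ (ihom (sharp.obj A)).obj (sharp.obj C)
  /-- the tensor product of cartesian arrows is cartesian -/
  tensorCart : ∀ {A A' C C' : E} (f : A ⟶ A') (g : C ⟶ C'),
    IsCart sharp f → IsCart sharp g → IsCart sharp (f ⊗ₘ g)
  /-- the parameterized-terminal functor `q`, a full and faithful right adjoint of `⋔`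
  whose counit is strictly the identity -/
  q : B ⥤ E
  adj : sharp ⊣ q
  qFull : q.Full
  qFaithful : q.Faithful
  sharpQObj : ∀ X : B, sharp.obj (q.obj X) = X
  counitId : ∀ X : B, adj.counit.app X = eqToHom (sharpQObj X)
  /-- the parameterized-unit functor `p`, with `p 1 = I`, given by cartesian liftings -/
  p : B ⥤ E
  pTop : p.obj (𝟙_ B) = 𝟙_ E
  sharpPObj : ∀ X : B, sharp.obj (p.obj X) = X
  sharpPMap : ∀ {X Y : B} (f : X ⟶ Y),
    sharp.map (p.map f) = eqToHom (sharpPObj X) ≫ f ≫ eqToHom (sharpPObj Y).symm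
  pCart : ∀ {X Y : B} (f : X ⟶ Y), IsCart sharp (p.map f)
  /-- the right adjoint `♭` of `p` -/
  flat : E ⥤ B
  padj : p ⊣ flat
  /-- the fibered monoidal product `A ⊗_{qX} C` of objects `a : A ⟶ q X`, `c : C ⟶ q X`
  of `E / q X`: the cartesian lifting of the inclusion `⋔A ×_X ⋔C ↪ ⋔A × ⋔C` at `A ⊗ C` -/
  ft : ∀ {X : B} (A C : E), (A ⟶ q.obj X) → (C ⟶ q.obj X) → E
  ftHom : ∀ {X : B} {A C : E} (a : A ⟶ q.obj X) (c : C ⟶ q.obj X), ft A C a c ⟶ A ⊗ C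
  ftCart : ∀ {X : B} {A C : E} (a : A ⟶ q.obj X) (c : C ⟶ q.obj X), IsCart sharp (ftHom a c)
  ftBase : ∀ {X : B} {A C : E} (a : A ⟶ q.obj X) (c : C ⟶ q.obj X),
    sharp.obj (ft A C a c) =
      pullback (sharp.map a ≫ eqToHom (sharpQObj X)) (sharp.map c ≫ eqToHom (sharpQObj X))
  ftMapEq : ∀ {X : B} {A C : E} (a : A ⟶ q.obj X) (c : C ⟶ q.obj X),
    sharp.map (ftHom a c) = eqToHom (ftBase a c) ≫
      CartesianMonoidalCategory.lift (pullback.fst _ _) (pullback.snd _ _) ≫ (sharpTensorIso A C).inv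
  /-- the structure map `A ⊗_{qX} C ⟶ q X` -/
  ftP : ∀ {X : B} {A C : E} (a : A ⟶ q.obj X) (c : C ⟶ q.obj X), ft A C a c ⟶ q.obj X
  ftP_eq : ∀ {X : B} {A C : E} (a : A ⟶ q.obj X) (c : C ⟶ q.obj X),
    ftP a c = adj.homEquiv _ _
      (eqToHom (ftBase a c) ≫ pullback.fst _ _ ≫ sharp.map a ≫ eqToHom (sharpQObj X))
  /-- the projection of `A ⊗_{qX} C` to the parameterized terminal `q (⋔ C)` of the second
  factor (used for dependent monoidal products) -/
  ftPR : ∀ {X : B} {A C : E} (a : A ⟶ q.obj X) (c : C ⟶ q.obj X),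
    ft A C a c ⟶ q.obj (sharp.obj C)
  ftPR_eq : ∀ {X : B} {A C : E} (a : A ⟶ q.obj X) (c : C ⟶ q.obj X),
    ftPR a c = adj.homEquiv _ _ (eqToHom (ftBase a c) ≫ pullback.snd _ _)
  /-- functoriality of the fibered tensor in the first variable, over `q X` -/
  ftMapL : ∀ {X : B} {A A' C : E} {a : A ⟶ q.obj X} {a' : A' ⟶ q.obj X}
    (c : C ⟶ q.obj X) (g : A ⟶ A'), g ≫ a' = a → (ft A C a c ⟶ ft A' C a' c)
  ftMapL_comm : ∀ {X : B} {A A' C : E} {a : A ⟶ q.obj X} {a' : A' ⟶ q.obj X}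
    (c : C ⟶ q.obj X) (g : A ⟶ A') (hg : g ≫ a' = a),
    ftMapL c g hg ≫ ftHom a' c = ftHom a c ≫ (g ⊗ₘ 𝟙 C)
  /-- the fibered function space `A ⊸_{qX} C` -/
  fh : ∀ {X : B} (A C : E), (A ⟶ q.obj X) → (C ⟶ q.obj X) → E
  fhProj : ∀ {X : B} {A C : E} (a : A ⟶ q.obj X) (c : C ⟶ q.obj X), fh A C a c ⟶ q.obj X
  /-- evaluation (counit of `- ⊗_{qX} A ⊣ A ⊸_{qX} -`) -/
  fhEv : ∀ {X : B} {A C : E} (a : A ⟶ q.obj X) (c : C ⟶ q.obj X),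
    ft (fh A C a c) A (fhProj a c) a ⟶ C
  fhEv_over : ∀ {X : B} {A C : E} (a : A ⟶ q.obj X) (c : C ⟶ q.obj X),
    fhEv a c ≫ c = ftP (fhProj a c) a
  /-- each slice `E / q X` is monoidal closed: `- ⊗_{qX} A ⊣ A ⊸_{qX} -` -/
  fhUP : ∀ {X : B} {A C D : E} (a : A ⟶ q.obj X) (c : C ⟶ q.obj X) (d : D ⟶ q.obj X)
    (f : ft D A d a ⟶ C), f ≫ c = ftP d a →
    ∃! g : {g : D ⟶ fh A C a c // g ≫ fhProj a c = d},
      ftMapL a g.1 g.2 ≫ fhEv a c = f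

lemma isCart_of_isIso (F : E ⥤ B) {A T : E} (f : A ⟶ T) [IsIso f] : IsCart F f := by
  intro Z0 g b hb
  refine ⟨g ≫ inv f, ⟨?_, by simp⟩, ?_⟩
  · rw [F.map_comp, hb, Category.assoc, ← F.map_comp, IsIso.hom_inv_id, F.map_id,
      Category.comp_id]
  · rintro v ⟨hv1, hv2⟩; rw [← hv2]; simp

lemma isCart_comp {F : E ⥤ B} {A T U : E} {f : A ⟶ T} {g : T ⟶ U}
    (hf : IsCart F f) (hg : IsCart F g) : IsCart F (f ≫ g) := by
  intro Z0 h b hb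
  obtain ⟨u₁, ⟨hu₁, hu₁'⟩, uq₁⟩ := hg h (b ≫ F.map f) (by rw [hb, F.map_comp, Category.assoc])
  obtain ⟨u₂, ⟨hu₂, hu₂'⟩, uq₂⟩ := hf u₁ b hu₁
  refine ⟨u₂, ⟨hu₂, by rw [← Category.assoc, hu₂', hu₁']⟩, ?_⟩
  rintro v ⟨hv1, hv2⟩
  have h1 : v ≫ f = u₁ := uq₁ (v ≫ f) ⟨by rw [F.map_comp, hv1], by rw [Category.assoc]; exact hv2⟩
  exact uq₂ v ⟨hv1, h1⟩

lemma cart_lift_iso {F : E ⥤ B} {A A' T : E} {f : A ⟶ T} {f' : A' ⟶ T}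
    (hf : IsCart F f) (hf' : IsCart F f') (h : F.obj A ≅ F.obj A')
    (hcomm : F.map f = h.hom ≫ F.map f') : Nonempty (A ≅ A') := by
  obtain ⟨u, ⟨hu1, hu2⟩, _⟩ := hf' f h.hom hcomm
  obtain ⟨v, ⟨hv1, hv2⟩, _⟩ := hf f' h.inv (by rw [hcomm, ← Category.assoc]; simp)
  obtain ⟨w, -, hwu⟩ := hf f (𝟙 _) (by simp)
  obtain ⟨w', -, hwu'⟩ := hf' f' (𝟙 _) (by simp)
  refine ⟨⟨u, v, ?_, ?_⟩⟩
  · rw [hwu (u ≫ v) ⟨by rw [F.map_comp, hu1, hv1]; simp, by rw [Category.assoc, hv2, hu2]⟩,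
      hwu (𝟙 A) ⟨by simp, by simp⟩]
  · rw [hwu' (v ≫ u) ⟨by rw [F.map_comp, hv1, hu1]; simp, by rw [Category.assoc, hu2, hv2]⟩,
      hwu' (𝟙 A') ⟨by simp, by simp⟩]

/-- Lemma B.2: for `π_X : X ⟶ Y` and `π_Z : Z ⟶ Y` in `B`, a fibered product
`q Z ×_{qY} p X` in `E` (a pullback of `q π_Z` and the canonical map `p X ⟶ q Y`)
satisfies `q Z ×_{qY} p X ≅ p Z ⊗_{qY} p X ≅ p (⋔ (q Z ×_{qY} p X))`: it is again a
parameter object. -/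
theorem qz_fib_prod_px
    [MonoidalCategory E] [SymmetricCategory E] [MonoidalClosed E] [HasTerminal E]
    [CartesianMonoidalCategory B] [MonoidalClosed B] [HasPullbacks B]
    (S : StateParamFib E B) {X Y Z : B} (πX : X ⟶ Y) (πZ : Z ⟶ Y)
    (W : E) (w₁ : W ⟶ S.q.obj Z) (w₂ : W ⟶ S.p.obj X)
    (hW : IsPullback w₁ w₂ (S.q.map πZ)
      (S.adj.homEquiv _ _ (eqToHom (S.sharpPObj X) ≫ πX))) :
    Nonempty (W ≅ S.ft (S.p.obj Z) (S.p.obj X)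
        (S.adj.homEquiv _ _ (eqToHom (S.sharpPObj Z) ≫ πZ))
        (S.adj.homEquiv _ _ (eqToHom (S.sharpPObj X) ≫ πX))) ∧
      Nonempty (W ≅ S.p.obj (S.sharp.obj W)) := by
  classical
  set F := S.sharp with hF
  -- ext for maps into q-objects
  have q_ext : ∀ {A : E} {X0 : B} {t t' : A ⟶ S.q.obj X0}, F.map t = F.map t' → t = t' := by
    intro A X0 t t' h
    apply (S.adj.homEquiv A X0).symm.injective
    rw [Adjunction.homEquiv_counit, Adjunction.homEquiv_counit, h]
  have sharp_homEquiv : ∀ {A : E} {X0 : B} (b : F.obj A ⟶ X0),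
      F.map ((S.adj.homEquiv A X0) b) ≫ eqToHom (S.sharpQObj X0) = b := by
    intro A X0 b
    have h0 := (S.adj.homEquiv A X0).symm_apply_apply b
    rwa [Adjunction.homEquiv_counit, S.counitId] at h0
  have q_map_sharp : ∀ {X0 Y0 : B} (g : X0 ⟶ Y0),
      F.map (S.q.map g) ≫ eqToHom (S.sharpQObj Y0) = eqToHom (S.sharpQObj X0) ≫ g := by
    intro X0 Y0 g
    have h0 := S.adj.counit.naturality g
    rw [S.counitId, S.counitId] at h0
    simpa using h0
  set a := S.adj.homEquiv _ _ (eqToHom (S.sharpPObj Z) ≫ πZ) with ha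
  set c := S.adj.homEquiv _ _ (eqToHom (S.sharpPObj X) ≫ πX) with hc
  set Q : B := pullback πZ πX with hQdef
  set v₂ : S.p.obj Q ⟶ S.p.obj X := S.p.map (pullback.snd πZ πX) with hv₂
  set v₁ : S.p.obj Q ⟶ S.q.obj Z :=
    S.adj.homEquiv _ _ (eqToHom (S.sharpPObj Q) ≫ pullback.fst πZ πX) with hv₁
  have Fv₂ : F.map v₂ = eqToHom (S.sharpPObj Q) ≫ pullback.snd πZ πX ≫
      eqToHom (S.sharpPObj X).symm := by
    rw [hv₂, S.sharpPMap]
  have Fv₁ : F.map v₁ ≫ eqToHom (S.sharpQObj Z) =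
      eqToHom (S.sharpPObj Q) ≫ pullback.fst πZ πX := sharp_homEquiv _
  have Fc : F.map c ≫ eqToHom (S.sharpQObj Y) = eqToHom (S.sharpPObj X) ≫ πX :=
    sharp_homEquiv _
  have Fa : F.map a ≫ eqToHom (S.sharpQObj Y) = eqToHom (S.sharpPObj Z) ≫ πZ :=
    sharp_homEquiv _
  have sq : v₁ ≫ S.q.map πZ = v₂ ≫ c := by
    apply q_ext
    have h1 : (F.map (v₁ ≫ S.q.map πZ)) ≫ eqToHom (S.sharpQObj Y) =
        (F.map (v₂ ≫ c)) ≫ eqToHom (S.sharpQObj Y) := by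
      rw [F.map_comp, F.map_comp, Category.assoc, Category.assoc, q_map_sharp, Fc,
        ← Category.assoc, ← Category.assoc, Fv₁, Fv₂]
      simp [pullback.condition]
    exact (cancel_mono (eqToHom (S.sharpQObj Y))).mp h1
  have key : ∀ {T : E} (t₁ : T ⟶ S.q.obj Z) (t₂ : T ⟶ S.p.obj X),
      t₁ ≫ S.q.map πZ = t₂ ≫ c →
      ∃ u : T ⟶ S.p.obj Q, (u ≫ v₁ = t₁ ∧ u ≫ v₂ = t₂) ∧
        ∀ v, (v ≫ v₁ = t₁ ∧ v ≫ v₂ = t₂) → v = u := by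
    intro T t₁ t₂ hcond
    have pf : (F.map t₁ ≫ eqToHom (S.sharpQObj Z)) ≫ πZ =
        (F.map t₂ ≫ eqToHom (S.sharpPObj X)) ≫ πX := by
      have h0 := congrArg (fun t => F.map t ≫ eqToHom (S.sharpQObj Y)) hcond
      simp only [F.map_comp, Category.assoc] at h0
      rw [q_map_sharp, Fc] at h0
      simpa only [Category.assoc] using h0
    set b : F.obj T ⟶ Q := pullback.lift _ _ pf with hb
    have hbfst : b ≫ pullback.fst πZ πX = F.map t₁ ≫ eqToHom (S.sharpQObj Z) :=
      pullback.lift_fst _ _ _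
    have hbsnd : b ≫ pullback.snd πZ πX = F.map t₂ ≫ eqToHom (S.sharpPObj X) :=
      pullback.lift_snd _ _ _
    obtain ⟨u, ⟨hu1, hu2⟩, huq⟩ := S.pCart (pullback.snd πZ πX) t₂
      (b ≫ eqToHom (S.sharpPObj Q).symm)
      (by rw [S.sharpPMap]
          have hh : (b ≫ eqToHom (S.sharpPObj Q).symm) ≫ eqToHom (S.sharpPObj Q) ≫
              pullback.snd πZ πX ≫ eqToHom (S.sharpPObj X).symm =
              (b ≫ pullback.snd πZ πX) ≫ eqToHom (S.sharpPObj X).symm := by simp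
          rw [hh, hbsnd]; simp; rfl)
    have hufst : u ≫ v₁ = t₁ := by
      apply q_ext
      apply (cancel_mono (eqToHom (S.sharpQObj Z))).mp
      rw [F.map_comp, Category.assoc, Fv₁, hu1]
      have hh : (b ≫ eqToHom (S.sharpPObj Q).symm) ≫ eqToHom (S.sharpPObj Q) ≫
          pullback.fst πZ πX = b ≫ pullback.fst πZ πX := by simp
      rw [hh, hbfst]
    refine ⟨u, ⟨hufst, hu2⟩, ?_⟩
    rintro v ⟨hv1, hv2⟩
    refine huq v ⟨?_, hv2⟩
    have hFv : F.map v ≫ eqToHom (S.sharpPObj Q) = b := by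
      apply pullback.hom_ext
      · rw [hbfst, Category.assoc, ← Fv₁, ← Category.assoc, ← F.map_comp, hv1]
      · rw [hbsnd]
        have : eqToHom (S.sharpPObj Q) ≫ pullback.snd πZ πX =
            F.map v₂ ≫ eqToHom (S.sharpPObj X) := by rw [Fv₂]; simp
        rw [Category.assoc, this, ← Category.assoc, ← F.map_comp, hv2]
    rw [← hFv]; simp; rfl
  have ispb : IsPullback v₁ v₂ (S.q.map πZ) c := by
    have key2 : ∀ s : PullbackCone (S.q.map πZ) c, ∃ u : s.pt ⟶ S.p.obj Q,
        (u ≫ v₁ = s.fst ∧ u ≫ v₂ = s.snd) ∧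
        ∀ v, (v ≫ v₁ = s.fst ∧ v ≫ v₂ = s.snd) → v = u :=
      fun s => key s.fst s.snd s.condition
    choose L hfac huniq using key2
    exact IsPullback.of_isLimit (PullbackCone.IsLimit.mk sq L
      (fun s => (hfac s).1) (fun s => (hfac s).2)
      (fun s m h1 h2 => huniq s m ⟨h1, h2⟩))
  -- iso of W with p Q
  have iW : W ≅ S.p.obj Q := IsPullback.isoIsPullback _ _ hW ispb
  -- maps into F.obj (𝟙_ E) are unique
  have unit_ext : ∀ {A0 : B} (f g : A0 ⟶ F.obj (𝟙_ E)), f = g := by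
    intro A0 f g
    have h0 : f ≫ S.sharpUnitIso.hom = g ≫ S.sharpUnitIso.hom :=
      CartesianMonoidalCategory.toUnit_unique _ _
    simpa using congrArg (fun t => t ≫ S.sharpUnitIso.inv) h0
  -- cartesian maps to the unit
  have pUnitCart : ∀ (X0 : B),
      IsCart F (S.p.map (CartesianMonoidalCategory.toUnit X0) ≫ eqToHom S.pTop) := by
    intro X0
    exact isCart_comp (S.pCart _) (isCart_of_isIso F _)
  set T' := S.ft (S.p.obj Z) (S.p.obj X) a c with hT'
  set uZ : S.p.obj Z ⟶ 𝟙_ E := S.p.map (CartesianMonoidalCategory.toUnit Z) ≫ eqToHom S.pTop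
  set uX : S.p.obj X ⟶ 𝟙_ E := S.p.map (CartesianMonoidalCategory.toUnit X) ≫ eqToHom S.pTop
  have tCart : IsCart F (S.ftHom a c ≫ (uZ ⊗ₘ uX) ≫ (λ_ (𝟙_ E)).hom) :=
    isCart_comp (S.ftCart a c)
      (isCart_comp (S.tensorCart _ _ (pUnitCart Z) (pUnitCart X)) (isCart_of_isIso F _))
  set R := F.obj T' with hR
  have iT : Nonempty (T' ≅ S.p.obj R) := by
    exact cart_lift_iso tCart (pUnitCart R) (eqToIso (S.sharpPObj R).symm) (unit_ext _ _)
  obtain ⟨iT⟩ := iT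
  -- identify R with Q
  have e1 : F.map a ≫ eqToHom (S.sharpQObj Y) = eqToHom (S.sharpPObj Z) ≫ πZ := Fa
  have e2 : F.map c ≫ eqToHom (S.sharpQObj Y) = eqToHom (S.sharpPObj X) ≫ πX := Fc
  have μcond : (pullback.fst (F.map a ≫ eqToHom (S.sharpQObj Y))
        (F.map c ≫ eqToHom (S.sharpQObj Y)) ≫ eqToHom (S.sharpPObj Z)) ≫ πZ =
      (pullback.snd _ _ ≫ eqToHom (S.sharpPObj X)) ≫ πX := by
    rw [Category.assoc, Category.assoc, ← e1, ← e2]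
    exact pullback.condition
  have μcond' : (pullback.fst πZ πX ≫ eqToHom (S.sharpPObj Z).symm) ≫
        (F.map a ≫ eqToHom (S.sharpQObj Y)) =
      (pullback.snd πZ πX ≫ eqToHom (S.sharpPObj X).symm) ≫
        (F.map c ≫ eqToHom (S.sharpQObj Y)) := by
    rw [e1, e2]
    simp [pullback.condition]
  set μh : pullback (F.map a ≫ eqToHom (S.sharpQObj Y))
      (F.map c ≫ eqToHom (S.sharpQObj Y)) ⟶ Q := pullback.lift _ _ μcond with hμh
  set μi : Q ⟶ pullback (F.map a ≫ eqToHom (S.sharpQObj Y))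
      (F.map c ≫ eqToHom (S.sharpQObj Y)) := pullback.lift _ _ μcond' with hμi
  have μiso : pullback (F.map a ≫ eqToHom (S.sharpQObj Y))
      (F.map c ≫ eqToHom (S.sharpQObj Y)) ≅ Q := by
    refine ⟨μh, μi, ?_, ?_⟩
    · apply pullback.hom_ext <;> simp only [hμh, hμi, Category.assoc, pullback.lift_fst, pullback.lift_snd, pullback.lift_fst_assoc, pullback.lift_snd_assoc, eqToHom_trans, eqToHom_refl, Category.comp_id, Category.id_comp]
    · apply pullback.hom_ext <;> simp only [hμh, hμi, Category.assoc, pullback.lift_fst, pullback.lift_snd, pullback.lift_fst_assoc, pullback.lift_snd_assoc, eqToHom_trans, eqToHom_refl, Category.comp_id, Category.id_comp]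
  have RQ : R ≅ Q := eqToIso (S.ftBase a c) ≪≫ μiso
  constructor
  · exact ⟨iW ≪≫ S.p.mapIso RQ.symm ≪≫ iT.symm⟩
  · exact ⟨iW ≪≫ S.p.mapIso (F.mapIso iW ≪≫ eqToIso (S.sharpPObj Q)).symm⟩
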